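/- Let n ∈ ℕ and f : ℝ → ℂ. Then for all λ₀, λ₁,…,λₙ ∈ ℝ with all λⱼ distinct, the divided difference identity f^{[n]}(λ₀,…,λₙ) = Σ_{p=0}^{n} (-1)^{n-p} Σ_{0<j₁<⋯<j_p≤n} (f u^p)^{[p]}(λ₀, λ_{j₁},…,λ_{j_p}) · u(λ₁)^{-1} ⋯ u(λₙ)^{-1} holds, where u(x) = x - i. -/

import Mathlib

open Complex Finset

noncomputable def lagrangeDivDiff (g : ℝ → ℂ) (s : Finset ℝ) : ℂ :=
  ∑ x ∈ s, g x / ∏ y ∈ s.erase x, ((x : ℂ) - (y : ℂ))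

lemma powerset_neg_one_sum {ι : Type*} [DecidableEq ι] (M : Finset ι) (a : ι → ℂ) :
    ∑ T ∈ M.powerset, (-1 : ℂ) ^ (M.card - T.card) * ∏ j ∈ T, a j
      = ∏ j ∈ M, (a j - 1) := by
  have h : ∏ j ∈ M, (a j - 1) = ∏ j ∈ M, (a j + (-1)) :=
    Finset.prod_congr rfl fun j _ => by ring
  rw [h, Finset.prod_add]
  refine Finset.sum_congr rfl fun T hT => ?_
  rw [Finset.prod_const, Finset.card_sdiff_of_subset (Finset.mem_powerset.mp hT), mul_comm]

lemma sum_powerset_mem {ι : Type*} [DecidableEq ι] (U : Finset ι)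
    (G : ι → Finset ι → ℂ) :
    ∑ S ∈ U.powerset, ∑ k ∈ S, G k S
      = ∑ k ∈ U, ∑ T ∈ (U.erase k).powerset, G k (insert k T) := by
  have h1 : ∀ S ∈ U.powerset, ∑ k ∈ S, G k S = ∑ k ∈ U, if k ∈ S then G k S else 0 := by
    intro S hS
    rw [Finset.sum_ite_mem, Finset.inter_eq_right.mpr (Finset.mem_powerset.mp hS)]
  rw [Finset.sum_congr rfl h1, Finset.sum_comm]
  refine Finset.sum_congr rfl fun k hk => ?_
  rw [← Finset.sum_filter]
  refine Finset.sum_nbij' (fun S => S.erase k) (fun T => insert k T) ?_ ?_ ?_ ?_ ?_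
  · intro S hS
    rw [Finset.mem_filter, Finset.mem_powerset] at hS
    exact Finset.mem_powerset.mpr (Finset.erase_subset_erase k hS.1)
  · intro T hT
    rw [Finset.mem_powerset] at hT
    rw [Finset.mem_filter, Finset.mem_powerset]
    exact ⟨Finset.insert_subset hk (hT.trans (Finset.erase_subset k U)),
      Finset.mem_insert_self k T⟩
  · intro S hS
    rw [Finset.mem_filter] at hS
    exact Finset.insert_erase hS.2
  · intro T hT
    rw [Finset.mem_powerset] at hT
    exact Finset.erase_insert (fun hkT => (Finset.mem_erase.mp (hT hkT)).1 rfl)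
  · intro S hS
    rw [Finset.mem_filter] at hS
    rw [Finset.insert_erase hS.2]

/-- key algebraic identity used for both the `k = 0` and `k ∈ S` coefficients -/
lemma keyA {ι : Type*} [DecidableEq ι] (M : Finset ι) (A : ℂ) (dd aa : ι → ℂ)
    (hdd : ∀ j ∈ M, dd j ≠ 0) (haa : ∀ j ∈ M, aa j ≠ 0)
    (hrel : ∀ j ∈ M, A - dd j = aa j) :
    (∑ S ∈ M.powerset, (-1 : ℂ) ^ (M.card - S.card) * (A ^ S.card / ∏ j ∈ S, dd j)) *
        ∏ j ∈ M, (aa j)⁻¹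
      = (∏ j ∈ M, dd j)⁻¹ := by
  have h1 : ∀ S ∈ M.powerset, (-1 : ℂ) ^ (M.card - S.card) * (A ^ S.card / ∏ j ∈ S, dd j)
      = (-1 : ℂ) ^ (M.card - S.card) * ∏ j ∈ S, (A / dd j) := by
    intro S hS
    rw [Finset.prod_div_distrib, Finset.prod_const]
  rw [Finset.sum_congr rfl h1, powerset_neg_one_sum, ← Finset.prod_inv_distrib,
    ← Finset.prod_mul_distrib]
  refine Finset.prod_congr rfl fun j hj => ?_
  rw [div_sub_one (hdd j hj), hrel j hj,
    show aa j / dd j * (aa j)⁻¹ = aa j * (aa j)⁻¹ * (dd j)⁻¹ from by ring,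
    mul_inv_cancel₀ (haa j hj), one_mul]

theorem divDiff_expansion (n : ℕ) (f : ℝ → ℂ) (lam : Fin (n + 1) → ℝ)
    (hlam : Function.Injective lam) :
    lagrangeDivDiff f (Finset.image lam Finset.univ)
      = ∑ p ∈ range (n + 1), (-1 : ℂ) ^ (n - p) *
          ∑ S ∈ Finset.powersetCard p ((Finset.univ : Finset (Fin (n + 1))).erase 0),
            lagrangeDivDiff (fun x => f x * ((x : ℂ) - I) ^ p)
                (insert (lam 0) (Finset.image lam S)) *
              ∏ j ∈ (Finset.univ : Finset (Fin (n + 1))).erase 0, (((lam j : ℂ) - I))⁻¹ := by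
  classical
  have hane : ∀ j : Fin (n + 1), ((lam j : ℂ) - I) ≠ 0 := by
    intro j h
    have := congrArg Complex.im h
    simp at this
  have hdne : ∀ k j : Fin (n + 1), k ≠ j → ((lam k : ℂ) - (lam j : ℂ)) ≠ 0 := by
    intro k j hkj h
    exact hkj (hlam (by exact_mod_cast sub_eq_zero.mp h))
  have hcard : ((Finset.univ : Finset (Fin (n + 1))).erase 0).card = n := by
    rw [Finset.card_erase_of_mem (Finset.mem_univ 0), Finset.card_univ, Fintype.card_fin]
    rfl
  have himg : ∀ (g : ℝ → ℂ) (s : Finset (Fin (n + 1))),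
      lagrangeDivDiff g (Finset.image lam s)
        = ∑ k ∈ s, g (lam k) / ∏ j ∈ s.erase k, ((lam k : ℂ) - (lam j : ℂ)) := by
    intro g s
    unfold lagrangeDivDiff
    rw [Finset.sum_image (fun x _ y _ h => hlam h)]
    refine Finset.sum_congr rfl fun k hk => ?_
    rw [← Finset.image_erase hlam, Finset.prod_image (fun x _ y _ h => hlam h)]
  set U : Finset (Fin (n + 1)) := (Finset.univ : Finset (Fin (n + 1))).erase 0 with hUdef
  -- Step 1: turn the double sum over (p, S) into a sum over the powerset of U
  have hR1 : (∑ p ∈ range (n + 1), (-1 : ℂ) ^ (n - p) *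
          ∑ S ∈ Finset.powersetCard p U,
            lagrangeDivDiff (fun x => f x * ((x : ℂ) - I) ^ p)
                (insert (lam 0) (Finset.image lam S)) *
              ∏ j ∈ U, (((lam j : ℂ) - I))⁻¹)
      = ∑ S ∈ U.powerset,
          ((-1 : ℂ) ^ (n - S.card) *
            (f (lam 0) * ((lam 0 : ℂ) - I) ^ S.card / ∏ j ∈ S, ((lam 0 : ℂ) - (lam j : ℂ))) *
            ∏ j ∈ U, (((lam j : ℂ) - I))⁻¹
          + ∑ k ∈ S, (-1 : ℂ) ^ (n - S.card) *
              (f (lam k) * ((lam k : ℂ) - I) ^ S.card /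
                (((lam k : ℂ) - (lam 0 : ℂ)) * ∏ j ∈ S.erase k, ((lam k : ℂ) - (lam j : ℂ)))) *
              ∏ j ∈ U, (((lam j : ℂ) - I))⁻¹) := by
    rw [Finset.sum_powerset, hcard]
    refine Finset.sum_congr rfl fun p hp => ?_
    rw [Finset.mul_sum]
    refine Finset.sum_congr rfl fun S hS => ?_
    have hcS : S.card = p := (Finset.mem_powersetCard.mp hS).2
    have h0S : (0 : Fin (n + 1)) ∉ S := fun h =>
      (Finset.mem_erase.mp ((Finset.mem_powersetCard.mp hS).1 h)).1 rfl
    rw [← hcS]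
    rw [show insert (lam 0) (Finset.image lam S) = Finset.image lam (insert 0 S) from
      (Finset.image_insert lam 0 S).symm, himg]
    rw [Finset.sum_insert h0S, Finset.erase_insert h0S]
    have hrw : ∀ k ∈ S, f (lam k) * ((lam k : ℂ) - I) ^ S.card /
          ∏ j ∈ (insert 0 S).erase k, ((lam k : ℂ) - (lam j : ℂ))
        = f (lam k) * ((lam k : ℂ) - I) ^ S.card /
            (((lam k : ℂ) - (lam 0 : ℂ)) * ∏ j ∈ S.erase k, ((lam k : ℂ) - (lam j : ℂ))) := by
      intro k hk
      have hk0 : k ≠ 0 := fun h => h0S (h ▸ hk)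
      congr 1
      rw [Finset.erase_insert_of_ne hk0.symm,
        Finset.prod_insert (fun h => h0S (Finset.mem_of_mem_erase h))]
    rw [Finset.sum_congr rfl hrw, add_mul, mul_add, Finset.sum_mul, Finset.mul_sum]
    congr 1
    · ring
    · exact Finset.sum_congr rfl fun k hk => by ring
  rw [hR1, himg, Finset.sum_add_distrib, sum_powerset_mem]
  -- the k = 0 part
  have hA : (∑ S ∈ U.powerset,
        (-1 : ℂ) ^ (n - S.card) *
          (f (lam 0) * ((lam 0 : ℂ) - I) ^ S.card / ∏ j ∈ S, ((lam 0 : ℂ) - (lam j : ℂ))) *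
          ∏ j ∈ U, (((lam j : ℂ) - I))⁻¹)
      = f (lam 0) / ∏ j ∈ U, ((lam 0 : ℂ) - (lam j : ℂ)) := by
    have key := keyA U ((lam 0 : ℂ) - I) (fun j => (lam 0 : ℂ) - (lam j : ℂ))
      (fun j => (lam j : ℂ) - I)
      (fun j hj => hdne 0 j (fun h => (Finset.mem_erase.mp hj).1 h.symm))
      (fun j _ => hane j)
      (fun j _ => by ring)
    beta_reduce at key
    calc (∑ S ∈ U.powerset,
        (-1 : ℂ) ^ (n - S.card) *
          (f (lam 0) * ((lam 0 : ℂ) - I) ^ S.card / ∏ j ∈ S, ((lam 0 : ℂ) - (lam j : ℂ))) *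
          ∏ j ∈ U, (((lam j : ℂ) - I))⁻¹)
        = (∑ S ∈ U.powerset, (-1 : ℂ) ^ (U.card - S.card) *
            (((lam 0 : ℂ) - I) ^ S.card / ∏ j ∈ S, ((lam 0 : ℂ) - (lam j : ℂ)))) *
            (∏ j ∈ U, (((lam j : ℂ) - I))⁻¹) * f (lam 0) := by
          rw [Finset.sum_mul, Finset.sum_mul]
          refine Finset.sum_congr rfl fun S hS => ?_
          rw [hcard]
          ring
      _ = (∏ j ∈ U, ((lam 0 : ℂ) - (lam j : ℂ)))⁻¹ * f (lam 0) := by rw [key]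
      _ = f (lam 0) / ∏ j ∈ U, ((lam 0 : ℂ) - (lam j : ℂ)) := by
          rw [div_eq_mul_inv, mul_comm]
  -- the k ∈ S part
  have hB : ∀ k ∈ U,
      (∑ T ∈ (U.erase k).powerset,
        (-1 : ℂ) ^ (n - (insert k T).card) *
          (f (lam k) * ((lam k : ℂ) - I) ^ (insert k T).card /
            (((lam k : ℂ) - (lam 0 : ℂ)) *
              ∏ j ∈ (insert k T).erase k, ((lam k : ℂ) - (lam j : ℂ)))) *
          ∏ j ∈ U, (((lam j : ℂ) - I))⁻¹)
      = f (lam k) / ∏ j ∈ Finset.univ.erase k, ((lam k : ℂ) - (lam j : ℂ)) := by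
    intro k hk
    have hk0 : k ≠ 0 := (Finset.mem_erase.mp hk).1
    have hn1 : 1 ≤ n := by
      have h1 := k.isLt
      have h2 : k.val ≠ 0 := fun h => hk0 (Fin.ext h)
      omega
    have hcardk : (U.erase k).card = n - 1 := by
      rw [Finset.card_erase_of_mem hk, hcard]
    have hKsplit : (∏ j ∈ U, (((lam j : ℂ) - I))⁻¹)
        = (((lam k : ℂ) - I))⁻¹ * ∏ j ∈ U.erase k, (((lam j : ℂ) - I))⁻¹ :=
      (Finset.mul_prod_erase U _ hk).symm
    have key := keyA (U.erase k) ((lam k : ℂ) - I) (fun j => (lam k : ℂ) - (lam j : ℂ))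
      (fun j => (lam j : ℂ) - I)
      (fun j hj => hdne k j (fun h => (Finset.mem_erase.mp hj).1 h.symm))
      (fun j _ => hane j)
      (fun j _ => by ring)
    beta_reduce at key
    have huniv : (Finset.univ : Finset (Fin (n + 1))).erase k = insert 0 (U.erase k) := by
      rw [hUdef, Finset.erase_right_comm,
        Finset.insert_erase (Finset.mem_erase.mpr ⟨hk0.symm, Finset.mem_univ 0⟩)]
    have h1 : ((lam k : ℂ) - (lam 0 : ℂ)) ≠ 0 := hdne k 0 hk0
    have h2 : (∏ j ∈ U.erase k, ((lam k : ℂ) - (lam j : ℂ))) ≠ 0 :=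
      Finset.prod_ne_zero_iff.mpr fun j hj => hdne k j fun h =>
        (Finset.mem_erase.mp hj).1 h.symm
    calc (∑ T ∈ (U.erase k).powerset,
        (-1 : ℂ) ^ (n - (insert k T).card) *
          (f (lam k) * ((lam k : ℂ) - I) ^ (insert k T).card /
            (((lam k : ℂ) - (lam 0 : ℂ)) *
              ∏ j ∈ (insert k T).erase k, ((lam k : ℂ) - (lam j : ℂ)))) *
          ∏ j ∈ U, (((lam j : ℂ) - I))⁻¹)
        = (∑ T ∈ (U.erase k).powerset, (-1 : ℂ) ^ ((U.erase k).card - T.card) *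
            (((lam k : ℂ) - I) ^ T.card / ∏ j ∈ T, ((lam k : ℂ) - (lam j : ℂ)))) *
            (∏ j ∈ U.erase k, (((lam j : ℂ) - I))⁻¹) *
            (f (lam k) * ((lam k : ℂ) - I) / ((lam k : ℂ) - (lam 0 : ℂ)) *
              (((lam k : ℂ) - I))⁻¹) := by
          rw [Finset.sum_mul, Finset.sum_mul]
          refine Finset.sum_congr rfl fun T hT => ?_
          have hkT : k ∉ T := fun h =>
            (Finset.mem_erase.mp (Finset.mem_powerset.mp hT h)).1 rfl
          have hTcard : T.card ≤ n - 1 := by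
            rw [← hcardk]
            exact Finset.card_le_card (Finset.mem_powerset.mp hT)
          rw [Finset.card_insert_of_notMem hkT, Finset.erase_insert hkT, hKsplit, hcardk,
            show n - (T.card + 1) = n - 1 - T.card from by omega, pow_succ,
            div_mul_eq_div_div]
          ring
      _ = (∏ j ∈ U.erase k, ((lam k : ℂ) - (lam j : ℂ)))⁻¹ *
            (f (lam k) * ((lam k : ℂ) - I) / ((lam k : ℂ) - (lam 0 : ℂ)) *
              (((lam k : ℂ) - I))⁻¹) := by rw [key]
      _ = f (lam k) / ∏ j ∈ Finset.univ.erase k, ((lam k : ℂ) - (lam j : ℂ)) := by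
          rw [huniv, Finset.prod_insert (fun h =>
            (Finset.mem_erase.mp (Finset.mem_erase.mp h).2).1 rfl)]
          field_simp [hane k]
          rw [← hUdef]
          simp only [mul_div_cancel_left₀ _ h2, mul_div_cancel_right₀ _ h2]
  rw [hA, Finset.sum_congr rfl hB]
  rw [hUdef, ← Finset.add_sum_erase _ _ (Finset.mem_univ 0)]
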